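/- In Probabilistic Serial, for any profile s of reported strict orderings, any agent i, any item j, and any ordering s*_i that ranks item j first, the time at which item j is fully consumed satisfies t_j(s*_i, s_{−i}) ≥ (1/4)·t_j(s). -/

import Mathlib

/-- A unit-sum valuation over `n` items. -/
def UnitSum {n : ℕ} (v : Fin n → ℝ) : Prop :=
  (∀ j, 0 ≤ v j) ∧ ∑ j, v j = 1

/-- A unit-range valuation over `n` items. -/
def UnitRange {n : ℕ} (v : Fin n → ℝ) : Prop :=
  (∀ j, 0 ≤ v j ∧ v j ≤ 1) ∧ (∃ j, v j = 1) ∧ (∃ j, v j = 0)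

/-- The optimal social welfare: the maximum over matchings (permutations of the
items) of the total utility. -/
noncomputable def SWopt {n : ℕ} (u : Fin n → Fin n → ℝ) : ℝ :=
  Finset.univ.sup' ⟨Equiv.refl (Fin n), Finset.mem_univ _⟩
    (fun μ : Equiv.Perm (Fin n) => ∑ i, u i (μ i))
/-- The state of the Probabilistic Serial eating process: `rem j` is the remaining
amount of item `j`, `cons i j` the amount of item `j` eaten so far by agent `i`,
`time` the current time, and `fin j` the time at which item `j` was fully consumed. -/
structure PSState (n : ℕ) where
  rem : Fin n → ℝ
  cons : Fin n → Fin n → ℝ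
  time : ℝ
  fin : Fin n → ℝ

open Classical in
/-- One phase of the Probabilistic Serial eating process: while some item remains,
every agent eats at rate 1 from her most preferred remaining item (preference
orderings are given as bijections from ranks to items, rank `0` being the most
preferred); the phase lasts until the first moment a currently eaten item is
exhausted. -/
noncomputable def psStep {n : ℕ} (s : Fin n → (Fin n ≃ Fin n)) (st : PSState n) :
    PSState n :=
  let avail : Finset (Fin n) := Finset.univ.filter (fun j => 0 < st.rem j)
  if h : avail.Nonempty then
    -- the most preferred still-available item of each agent
    let top : Fin n → Fin n := fun i =>
      let R : Finset (Fin n) := Finset.univ.filter (fun r => s i r ∈ avail)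
      if hR : R.Nonempty then s i (R.min' hR) else h.choose
    -- the number of agents currently eating item `j`
    let rate : Fin n → ℕ := fun j => (Finset.univ.filter (fun i => top i = j)).card
    -- the duration of the phase: first time an eaten item is exhausted
    let Δ : ℝ := sInf {x : ℝ | ∃ j ∈ avail, 0 < rate j ∧ x = st.rem j / (rate j : ℝ)}
    { rem := fun j => st.rem j - (rate j : ℝ) * Δ
      cons := fun i j => st.cons i j + (if top i = j then Δ else 0)
      time := st.time + Δ
      fin := fun j =>
        if 0 < st.rem j ∧ st.rem j - (rate j : ℝ) * Δ ≤ 0 then st.time + Δ else st.fin j }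
  else st

/-- The final state of the Probabilistic Serial eating process (there are at most
`n` phases, since in each phase at least one item is exhausted). -/
noncomputable def psFinal {n : ℕ} (s : Fin n → (Fin n ≃ Fin n)) : PSState n :=
  (psStep s)^[n] ⟨fun _ => 1, fun _ _ => 0, 0, fun _ => 1⟩

/-- `psProb s i j` is the probability that agent `i` receives item `j` under
Probabilistic Serial at report profile `s`, i.e. the amount of item `j` eaten by
agent `i`. -/
noncomputable def psProb {n : ℕ} (s : Fin n → (Fin n ≃ Fin n)) (i j : Fin n) : ℝ :=
  (psFinal s).cons i j

/-- `psTime s j` is the time at which item `j` is fully consumed under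
Probabilistic Serial at report profile `s`. -/
noncomputable def psTime {n : ℕ} (s : Fin n → (Fin n ≃ Fin n)) (j : Fin n) : ℝ :=
  (psFinal s).fin j

/-- The expected social welfare of Probabilistic Serial at report profile `s`
under true valuation profile `u`. -/
noncomputable def psSW {n : ℕ} (u : Fin n → Fin n → ℝ) (s : Fin n → (Fin n ≃ Fin n)) : ℝ :=
  ∑ i, ∑ j, psProb s i j * u i j

/-- `s` is a pure Nash equilibrium of Probabilistic Serial at true valuation
profile `u`: no agent can strictly increase her expected utility by unilaterally
reporting a different ordering. -/
def PSNash {n : ℕ} (u : Fin n → Fin n → ℝ) (s : Fin n → (Fin n ≃ Fin n)) : Prop :=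
  ∀ (i : Fin n) (s' : Fin n ≃ Fin n),
    ∑ j, psProb (Function.update s i s') i j * u i j ≤ ∑ j, psProb s i j * u i j


namespace PSAux
open Finset

variable {n : ℕ}

/-- state sequence of the PS process -/
noncomputable def St (rp : Fin n → (Fin n ≃ Fin n)) (k : ℕ) : PSState n :=
  (psStep rp)^[k] ⟨fun _ => 1, fun _ _ => 0, 0, fun _ => 1⟩

open Classical in
noncomputable def availS (st : PSState n) : Finset (Fin n) :=
  Finset.univ.filter (fun j => 0 < st.rem j)

open Classical in
noncomputable def topS (rp : Fin n → (Fin n ≃ Fin n)) (st : PSState n) (i : Fin n) : Fin n :=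
  let R : Finset (Fin n) := Finset.univ.filter (fun r => rp i r ∈ availS st)
  if hR : R.Nonempty then rp i (R.min' hR) else i

open Classical in
noncomputable def rateS (rp : Fin n → (Fin n ≃ Fin n)) (st : PSState n) (j : Fin n) : ℕ :=
  (Finset.univ.filter (fun i => topS rp st i = j)).card

noncomputable def delS (rp : Fin n → (Fin n ≃ Fin n)) (st : PSState n) : ℝ :=
  sInf {x : ℝ | ∃ j ∈ availS st, 0 < rateS rp st j ∧ x = st.rem j / (rateS rp st j : ℝ)}

lemma Rne (rp : Fin n → (Fin n ≃ Fin n)) (st : PSState n) (i : Fin n)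
    (h : (availS st).Nonempty) :
    (Finset.univ.filter (fun r => rp i r ∈ availS st)).Nonempty := by
  obtain ⟨a, ha⟩ := h
  exact ⟨(rp i).symm a, by simp [ha]⟩

lemma psStep_spec (rp : Fin n → (Fin n ≃ Fin n)) (st : PSState n)
    (h : (availS st).Nonempty) :
    psStep rp st =
      { rem := fun j => st.rem j - (rateS rp st j : ℝ) * delS rp st
        cons := fun i j => st.cons i j + (if topS rp st i = j then delS rp st else 0)
        time := st.time + delS rp st
        fin := fun j => if 0 < st.rem j ∧ st.rem j - (rateS rp st j : ℝ) * delS rp st ≤ 0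
          then st.time + delS rp st else st.fin j } := by
  have h' : (Finset.univ.filter (fun j => 0 < st.rem j)).Nonempty := h
  rw [psStep]
  rw [dif_pos h']
  have htop : ∀ i : Fin n,
      (if hR : (Finset.univ.filter (fun r => rp i r ∈
          Finset.univ.filter (fun j => 0 < st.rem j))).Nonempty
      then rp i ((Finset.univ.filter (fun r => rp i r ∈
          Finset.univ.filter (fun j => 0 < st.rem j))).min' hR) else h'.choose)
      = topS rp st i := by
    intro i
    have hR : (Finset.univ.filter (fun r => rp i r ∈ availS st)).Nonempty := Rne rp st i h
    simp only [topS, availS] at hR ⊢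
    simp only [hR, ↓reduceDIte]; exact dif_pos hR
  simp only [htop]
  rfl

lemma psStep_inactive (rp : Fin n → (Fin n ≃ Fin n)) (st : PSState n)
    (h : ¬ (availS st).Nonempty) : psStep rp st = st := by
  have h' : ¬ (Finset.univ.filter (fun j => 0 < st.rem j)).Nonempty := h
  rw [psStep, dif_neg h']

lemma mem_availS {st : PSState n} {a : Fin n} : a ∈ availS st ↔ 0 < st.rem a := by
  simp [availS]

variable (rp : Fin n → (Fin n ≃ Fin n)) (st : PSState n)

lemma topS_mem (h : (availS st).Nonempty) (i : Fin n) : topS rp st i ∈ availS st := by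
  simp only [topS]
  rw [dif_pos (Rne rp st i h)]
  have := Finset.min'_mem _ (Rne rp st i h)
  simp only [Finset.mem_filter] at this
  exact this.2

lemma topS_eq_iff (h : (availS st).Nonempty) (i a : Fin n) :
    topS rp st i = a ↔ a ∈ availS st ∧ ∀ b ∈ availS st, (rp i).symm a ≤ (rp i).symm b := by
  constructor
  · rintro rfl
    refine ⟨topS_mem rp st h i, fun b hb => ?_⟩
    simp only [topS]
    rw [dif_pos (Rne rp st i h)]
    rw [Equiv.symm_apply_apply]
    apply Finset.min'_le
    simp [hb]
  · rintro ⟨ha, hmin⟩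
    have h1 : (rp i).symm a ∈ Finset.univ.filter (fun r => rp i r ∈ availS st) := by
      simp [ha]
    have h2 : (Finset.univ.filter (fun r => rp i r ∈ availS st)).min' (Rne rp st i h)
        ≤ (rp i).symm a := Finset.min'_le _ _ h1
    have h3 := Finset.min'_mem _ (Rne rp st i h)
    simp only [Finset.mem_filter] at h3
    have h4 := hmin _ h3.2
    have h5 : (Finset.univ.filter (fun r => rp i r ∈ availS st)).min' (Rne rp st i h)
        = (rp i).symm a := by
      apply le_antisymm h2
      simpa using h4
    simp only [topS]
    rw [dif_pos (Rne rp st i h), h5]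
    simp

lemma topS_iff (h : (availS st).Nonempty) (i a : Fin n) :
    topS rp st i = a ↔
      (0 < st.rem a ∧ ∀ b : Fin n, (rp i).symm b < (rp i).symm a → st.rem b ≤ 0) := by
  rw [topS_eq_iff rp st h i a]
  constructor
  · rintro ⟨ha, hmin⟩
    refine ⟨mem_availS.1 ha, fun b hb => ?_⟩
    by_contra hb'
    push_neg at hb'
    exact absurd (hmin b (mem_availS.2 hb')) (not_le.2 hb)
  · rintro ⟨ha, hlt⟩
    refine ⟨mem_availS.2 ha, fun b hb => ?_⟩
    by_contra hc
    push_neg at hc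
    linarith [hlt b hc, mem_availS.1 hb]

lemma sum_rateS : ∑ j, (rateS rp st j : ℕ) = n := by
  classical
  have := Finset.card_eq_sum_card_fiberwise
    (f := fun i : Fin n => topS rp st i) (s := Finset.univ) (t := Finset.univ)
    (fun x _ => Finset.mem_univ _)
  simpa [rateS] using this.symm

lemma rateS_pos_mem {j : Fin n} (h : (availS st).Nonempty) (hj : 0 < rateS rp st j) :
    j ∈ availS st := by
  rw [rateS, Finset.card_pos] at hj
  obtain ⟨g, hg⟩ := hj
  simp only [Finset.mem_filter] at hg
  rw [← hg.2]
  exact topS_mem rp st h g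

noncomputable def delF : Finset ℝ :=
  ((availS st).filter (fun j => 0 < rateS rp st j)).image
    (fun j => st.rem j / (rateS rp st j : ℝ))

lemma delS_set_eq :
    {x : ℝ | ∃ j ∈ availS st, 0 < rateS rp st j ∧ x = st.rem j / (rateS rp st j : ℝ)}
      = ↑(delF rp st) := by
  ext x
  simp only [delF, Set.mem_setOf_eq, Finset.coe_image, Set.mem_image, Finset.mem_coe,
    Finset.mem_filter]
  constructor
  · rintro ⟨j, hj, hr, rfl⟩
    exact ⟨j, ⟨hj, hr⟩, rfl⟩
  · rintro ⟨j, ⟨hj, hr⟩, rfl⟩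
    exact ⟨j, hj, hr, rfl⟩

lemma delF_nonempty (hn : 0 < n) (h : (availS st).Nonempty) : (delF rp st).Nonempty := by
  refine ⟨st.rem (topS rp st ⟨0, hn⟩) / (rateS rp st (topS rp st ⟨0, hn⟩) : ℝ), ?_⟩
  rw [delF, Finset.mem_image]
  refine ⟨topS rp st ⟨0, hn⟩, ?_, rfl⟩
  rw [Finset.mem_filter]
  refine ⟨topS_mem rp st h _, ?_⟩
  rw [rateS, Finset.card_pos]
  exact ⟨⟨0, hn⟩, by simp⟩

lemma delS_mem (hn : 0 < n) (h : (availS st).Nonempty) : delS rp st ∈ delF rp st := by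
  rw [delS, delS_set_eq]
  have : (↑(delF rp st) : Set ℝ).Nonempty := by
    obtain ⟨x, hx⟩ := delF_nonempty rp st hn h
    exact ⟨x, hx⟩
  simpa using Set.Nonempty.csInf_mem this (Finset.finite_toSet _)

lemma delS_pos (hn : 0 < n) (h : (availS st).Nonempty)
    (hpos : ∀ j, 0 ≤ st.rem j) : 0 < delS rp st := by
  have hm := delS_mem rp st hn h
  rw [delF, Finset.mem_image] at hm
  obtain ⟨j, hj, heq⟩ := hm
  rw [Finset.mem_filter] at hj
  rw [← heq]
  exact div_pos (mem_availS.1 hj.1) (by exact_mod_cast hj.2)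

lemma delS_le {j : Fin n} (h : (availS st).Nonempty) (hj : 0 < rateS rp st j)
    (hja : j ∈ availS st) : delS rp st ≤ st.rem j / (rateS rp st j : ℝ) := by
  rw [delS, delS_set_eq]
  apply csInf_le (Finset.bddBelow _)
  rw [delF]
  simp only [Finset.coe_image, Set.mem_image, Finset.mem_coe, Finset.mem_filter]
  exact ⟨j, ⟨hja, hj⟩, rfl⟩

lemma exists_exhaust (hn : 0 < n) (h : (availS st).Nonempty) :
    ∃ j, 0 < st.rem j ∧ st.rem j - (rateS rp st j : ℝ) * delS rp st ≤ 0 := by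
  have hm := delS_mem rp st hn h
  rw [delF, Finset.mem_image] at hm
  obtain ⟨j, hj, heq⟩ := hm
  rw [Finset.mem_filter] at hj
  refine ⟨j, mem_availS.1 hj.1, ?_⟩
  have hr : (0 : ℝ) < (rateS rp st j : ℝ) := by exact_mod_cast hj.2
  rw [← heq]
  rw [mul_div_cancel₀ _ (ne_of_gt hr)]
  simp

lemma rem_step_nonneg (h : (availS st).Nonempty) (hpos : ∀ j, 0 ≤ st.rem j) (j : Fin n) :
    0 ≤ st.rem j - (rateS rp st j : ℝ) * delS rp st := by
  rcases Nat.eq_zero_or_pos (rateS rp st j) with h0 | hpos'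
  · simp [h0, hpos j]
  · have hja := rateS_pos_mem rp st h hpos'
    have hle := delS_le rp st h hpos' hja
    have hr : (0 : ℝ) < (rateS rp st j : ℝ) := by exact_mod_cast hpos'
    have := (le_div_iff₀ hr).1 hle
    nlinarith

def act (rp : Fin n → (Fin n ≃ Fin n)) (k : ℕ) : Prop := (availS (St rp k)).Nonempty

lemma St_zero (rp : Fin n → (Fin n ≃ Fin n)) :
    St rp 0 = ⟨fun _ => 1, fun _ _ => 0, 0, fun _ => 1⟩ := rfl

lemma St_succ (rp : Fin n → (Fin n ≃ Fin n)) (k : ℕ) :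
    St rp (k + 1) = psStep rp (St rp k) := Function.iterate_succ_apply' _ _ _

lemma St_succ_act {rp : Fin n → (Fin n ≃ Fin n)} {k : ℕ} (h : act rp k) :
    St rp (k + 1) =
      { rem := fun j => (St rp k).rem j -
          (rateS rp (St rp k) j : ℝ) * delS rp (St rp k)
        cons := fun g j => (St rp k).cons g j +
          (if topS rp (St rp k) g = j then delS rp (St rp k) else 0)
        time := (St rp k).time + delS rp (St rp k)
        fin := fun j => if 0 < (St rp k).rem j ∧ (St rp k).rem j -
            (rateS rp (St rp k) j : ℝ) * delS rp (St rp k) ≤ 0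
          then (St rp k).time + delS rp (St rp k) else (St rp k).fin j } := by
  rw [St_succ, psStep_spec rp _ h]

lemma St_succ_inact {rp : Fin n → (Fin n ≃ Fin n)} {k : ℕ} (h : ¬ act rp k) :
    St rp (k + 1) = St rp k := by
  rw [St_succ, psStep_inactive rp _ h]

variable (rp : Fin n → (Fin n ≃ Fin n))

lemma rem_nonneg (hn : 0 < n) : ∀ k j, 0 ≤ (St rp k).rem j := by
  intro k
  induction k with
  | zero => intro j; rw [St_zero]; norm_num
  | succ k ih =>
    intro j
    by_cases h : act rp k
    · rw [St_succ_act h]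
      exact rem_step_nonneg rp (St rp k) h ih j
    · rw [St_succ_inact h]; exact ih j

lemma rem_antitone (hn : 0 < n) (k : ℕ) (j : Fin n) :
    (St rp (k + 1)).rem j ≤ (St rp k).rem j := by
  by_cases h : act rp k
  · rw [St_succ_act h]
    have h1 : 0 < delS rp (St rp k) := delS_pos rp _ hn h (rem_nonneg rp hn k)
    have h2 : (0:ℝ) ≤ (rateS rp (St rp k) j : ℝ) := Nat.cast_nonneg _
    simp only []
    nlinarith
  · rw [St_succ_inact h]

lemma rem_antitone' (hn : 0 < n) {k l : ℕ} (hkl : k ≤ l) (j : Fin n) :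
    (St rp l).rem j ≤ (St rp k).rem j := by
  induction l with
  | zero => simp_all
  | succ l ih =>
    rcases Nat.lt_or_ge k (l+1) with h | h
    · exact le_trans (rem_antitone rp hn l j) (ih (Nat.lt_succ_iff.1 h))
    · have : k = l + 1 := le_antisymm hkl h
      subst this; rfl

lemma time_zero : (St rp 0).time = 0 := rfl

lemma time_succ_le (hn : 0 < n) (k : ℕ) : (St rp k).time ≤ (St rp (k+1)).time := by
  by_cases h : act rp k
  · rw [St_succ_act h]
    have h1 : 0 < delS rp (St rp k) := delS_pos rp _ hn h (rem_nonneg rp hn k)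
    simp only []
    linarith
  · rw [St_succ_inact h]

lemma time_lt_succ (hn : 0 < n) {k : ℕ} (h : act rp k) :
    (St rp k).time < (St rp (k+1)).time := by
  rw [St_succ_act h]
  have h1 : 0 < delS rp (St rp k) := delS_pos rp _ hn h (rem_nonneg rp hn k)
  simp only []
  linarith

lemma time_mono (hn : 0 < n) {k l : ℕ} (hkl : k ≤ l) :
    (St rp k).time ≤ (St rp l).time := by
  induction l with
  | zero => simp_all
  | succ l ih =>
    rcases Nat.lt_or_ge k (l+1) with h | h
    · exact le_trans (ih (Nat.lt_succ_iff.1 h)) (time_succ_le rp hn l)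
    · have : k = l + 1 := le_antisymm hkl h
      subst this; rfl

lemma time_nonneg (hn : 0 < n) (k : ℕ) : 0 ≤ (St rp k).time := by
  have := time_mono rp hn (Nat.zero_le k)
  rw [time_zero] at this
  exact this

lemma time_strict (hn : 0 < n) {k l : ℕ} (h : act rp k) (hkl : k < l) :
    (St rp k).time < (St rp l).time :=
  lt_of_lt_of_le (time_lt_succ rp hn h) (time_mono rp hn hkl)

lemma sum_rem (hn : 0 < n) (k : ℕ) :
    ∑ j, (St rp k).rem j = n * (1 - (St rp k).time) := by
  induction k with
  | zero => rw [St_zero]; simp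
  | succ k ih =>
    by_cases h : act rp k
    · rw [St_succ_act h]
      simp only []
      rw [Finset.sum_sub_distrib, ih, ← Finset.sum_mul]
      have : ∑ j, (rateS rp (St rp k) j : ℝ) = (n : ℝ) := by
        rw [← Nat.cast_sum]
        exact_mod_cast congrArg (Nat.cast : ℕ → ℝ) (sum_rateS rp (St rp k))
      rw [this]
      ring
    · rw [St_succ_inact h]; exact ih

lemma time_le_one (hn : 0 < n) (k : ℕ) : (St rp k).time ≤ 1 := by
  have h1 := sum_rem rp hn k
  have h2 : (0:ℝ) ≤ ∑ j, (St rp k).rem j :=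
    Finset.sum_nonneg fun j _ => rem_nonneg rp hn k j
  have hn' : (0:ℝ) < n := by exact_mod_cast hn
  nlinarith

lemma avail_antitone (hn : 0 < n) (k : ℕ) :
    availS (St rp (k+1)) ⊆ availS (St rp k) := by
  intro j hj
  rw [mem_availS] at hj ⊢
  exact lt_of_lt_of_le hj (rem_antitone rp hn k j)

lemma act_antitone (hn : 0 < n) {k l : ℕ} (hkl : k ≤ l) (h : act rp l) : act rp k := by
  induction l with
  | zero => simpa [Nat.le_zero.1 hkl] using h
  | succ l ih =>
    rcases Nat.lt_or_ge k (l+1) with h' | h'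
    · by_cases ha : act rp l
      · exact ih (Nat.lt_succ_iff.1 h') ha
      · rw [act, St_succ_inact ha] at h
        exact absurd h ha
    · have : k = l + 1 := le_antisymm hkl h'
      subst this; exact h

lemma card_avail (hn : 0 < n) (k : ℕ) : (availS (St rp k)).card ≤ n - k := by
  induction k with
  | zero =>
    simp only [Nat.sub_zero]
    calc (availS (St rp 0)).card ≤ (Finset.univ : Finset (Fin n)).card :=
          Finset.card_le_card (Finset.filter_subset _ _)
      _ = n := by simp
  | succ k ih =>
    by_cases h : act rp k
    · have hss : availS (St rp (k+1)) ⊂ availS (St rp k) := by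
        rw [Finset.ssubset_iff_of_subset (avail_antitone rp hn k)]
        obtain ⟨j, hj1, hj2⟩ := exists_exhaust rp (St rp k) hn h
        refine ⟨j, mem_availS.2 hj1, ?_⟩
        rw [mem_availS]
        rw [St_succ_act h]
        simp only []
        linarith
      have := Finset.card_lt_card hss
      omega
    · have : availS (St rp (k+1)) = availS (St rp k) := by rw [St_succ_inact h]
      rw [this]
      have h0 : (availS (St rp k)) = ∅ := Finset.not_nonempty_iff_eq_empty.1 h
      rw [h0]; simp

lemma rem_final (hn : 0 < n) (j : Fin n) : (St rp n).rem j = 0 := by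
  have h1 : (availS (St rp n)).card = 0 := le_antisymm (by simpa using card_avail rp hn n) (Nat.zero_le _)
  have h2 : availS (St rp n) = ∅ := Finset.card_eq_zero.1 h1
  have h3 : j ∉ availS (St rp n) := by rw [h2]; simp
  rw [mem_availS] at h3
  push_neg at h3
  exact le_antisymm h3 (rem_nonneg rp hn n j)

/-- index of the phase at which item `j` is exhausted -/
noncomputable def Ex (rp : Fin n → (Fin n ≃ Fin n)) (j : Fin n) : ℕ :=
  sInf {k | (St rp k).rem j ≤ 0}

/-- the time at which item `j` is exhausted -/
noncomputable def Tf (rp : Fin n → (Fin n ≃ Fin n)) (j : Fin n) : ℝ :=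
  (St rp (Ex rp j)).time

variable {j : Fin n}

lemma Ex_min_mem (hn : 0 < n) : (St rp (Ex rp j)).rem j ≤ 0 :=
  Nat.sInf_mem (⟨n, by simp [rem_final rp hn j]⟩ : {k | (St rp k).rem j ≤ 0}.Nonempty)

lemma Ex_le_n (hn : 0 < n) : Ex rp j ≤ n :=
  Nat.sInf_le (by simp [rem_final rp hn j])

lemma rem_pos_of_lt_Ex {k : ℕ} (hk : k < Ex rp j) : 0 < (St rp k).rem j := by
  have := Nat.notMem_of_lt_sInf hk
  simp only [Set.mem_setOf_eq, not_le] at this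
  exact this

lemma Ex_pos (hn : 0 < n) : 0 < Ex rp j := by
  by_contra h
  push_neg at h
  have h0 := Ex_min_mem (rp := rp) (j := j) hn
  rw [Nat.le_zero.1 h, St_zero] at h0
  norm_num at h0

lemma rem_zero_of_Ex_le (hn : 0 < n) {k : ℕ} (hk : Ex rp j ≤ k) : (St rp k).rem j = 0 := by
  induction k with
  | zero =>
    have : Ex rp j = 0 := Nat.le_zero.1 hk
    exact le_antisymm (by rw [← this]; exact Ex_min_mem rp hn) (rem_nonneg rp hn 0 j)
  | succ k ih =>
    rcases Nat.lt_or_ge k (Ex rp j) with h | h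
    · have : Ex rp j = k + 1 := le_antisymm hk h
      exact le_antisymm (by rw [← this]; exact Ex_min_mem rp hn) (rem_nonneg rp hn _ j)
    · have := ih h
      exact le_antisymm (this ▸ rem_antitone rp hn k j) (rem_nonneg rp hn _ j)

lemma lt_Ex_iff (hn : 0 < n) {k : ℕ} : k < Ex rp j ↔ 0 < (St rp k).rem j := by
  constructor
  · exact rem_pos_of_lt_Ex rp
  · intro h
    by_contra h'
    push_neg at h'
    rw [rem_zero_of_Ex_le rp hn h'] at h
    exact lt_irrefl _ h

lemma act_of_lt_Ex {k : ℕ} (hk : k < Ex rp j) : act rp k :=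
  ⟨j, mem_availS.2 (rem_pos_of_lt_Ex rp hk)⟩

lemma Ex_le_of_rem_nonpos {k : ℕ} (hk : (St rp k).rem j ≤ 0) : Ex rp j ≤ k :=
  Nat.sInf_le hk

lemma Tf_nonneg (hn : 0 < n) : 0 ≤ Tf rp j := time_nonneg rp hn _

lemma Tf_pos (hn : 0 < n) : 0 < Tf rp j := by
  have hE : 0 < Ex rp j := Ex_pos (j := j) rp hn
  have h0 : act rp 0 := act_of_lt_Ex rp hE
  exact lt_of_lt_of_le (by rw [← time_zero rp]; exact time_lt_succ rp hn h0)
    (time_mono rp hn hE)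

lemma Tf_le_one (hn : 0 < n) : Tf rp j ≤ 1 := time_le_one rp hn _

lemma fin_eq (hn : 0 < n) (k : ℕ) :
    (St rp k).fin j = if Ex rp j ≤ k then Tf rp j else 1 := by
  induction k with
  | zero =>
    have : ¬ Ex rp j ≤ 0 := by
      have := Ex_pos (rp := rp) (j := j) hn
      omega
    rw [if_neg this, St_zero]
  | succ k ih =>
    by_cases h : act rp k
    · rw [St_succ_act h]
      simp only []
      rcases Nat.lt_trichotomy (k+1) (Ex rp j) with hlt | heq | hgt
      · have hc : ¬ ((St rp k).rem j -
            (rateS rp (St rp k) j : ℝ) * delS rp (St rp k) ≤ 0) := by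
          have : 0 < (St rp (k+1)).rem j := rem_pos_of_lt_Ex rp hlt
          rw [St_succ_act h] at this
          simp only [] at this
          linarith
        rw [if_neg (by tauto), ih, if_neg (by omega), if_neg (by omega)]
      · have h1 : 0 < (St rp k).rem j := rem_pos_of_lt_Ex rp (by omega)
        have h2 : (St rp k).rem j -
            (rateS rp (St rp k) j : ℝ) * delS rp (St rp k) ≤ 0 := by
          have : (St rp (k+1)).rem j ≤ 0 := by rw [heq]; exact Ex_min_mem rp hn
          rw [St_succ_act h] at this
          simpa using this
        rw [if_pos ⟨h1, h2⟩, if_pos (le_of_eq heq.symm)]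
        rw [Tf, ← heq, St_succ_act h]
      · have h1 : ¬ (0 < (St rp k).rem j) := by
          rw [rem_zero_of_Ex_le rp hn (by omega : Ex rp j ≤ k)]
          exact lt_irrefl 0
        rw [if_neg (by tauto), ih, if_pos (by omega), if_pos (by omega)]
    · have hst := St_succ_inact h
      have hEx : Ex rp j ≤ k := by
        apply Ex_le_of_rem_nonpos
        by_contra hc
        push_neg at hc
        exact h ⟨j, mem_availS.2 hc⟩
      rw [hst, ih, if_pos hEx, if_pos (by omega)]

lemma psTime_eq (hn : 0 < n) : psTime rp j = Tf rp j := by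
  have h1 : psFinal rp = St rp n := rfl
  rw [psTime, h1, fin_eq rp hn n, if_pos (Ex_le_n rp hn)]

/-- Duration of phase `k`. -/
noncomputable def Dur (rp : Fin n → (Fin n ≃ Fin n)) (k : ℕ) : ℝ :=
  (St rp (k+1)).time - (St rp k).time

/-- Agent `g` eats item `a` during phase `k`. -/
def EatP (rp : Fin n → (Fin n ≃ Fin n)) (k : ℕ) (g a : Fin n) : Prop :=
  act rp k ∧ topS rp (St rp k) g = a

open Classical in
/-- Total time agent `g` spends eating item `a`. -/
noncomputable def mEat (rp : Fin n → (Fin n ≃ Fin n)) (g a : Fin n) : ℝ :=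
  ∑ p ∈ Finset.range n, if EatP rp p g a then Dur rp p else 0

lemma Dur_nonneg (hn : 0 < n) (k : ℕ) : 0 ≤ Dur rp k := by
  rw [Dur]
  have := time_succ_le rp hn k
  linarith

lemma mEat_nonneg (hn : 0 < n) (g a : Fin n) : 0 ≤ mEat rp g a :=
  Finset.sum_nonneg fun p _ => by
    split
    · exact Dur_nonneg rp hn p
    · rfl

open Classical in
lemma rem_eq_sum (hn : 0 < n) (a : Fin n) (k : ℕ) :
    (St rp k).rem a = 1 - ∑ p ∈ Finset.range k, ∑ g, (if EatP rp p g a then Dur rp p else 0) := by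
  induction k with
  | zero => rw [St_zero]; simp
  | succ k ih =>
    rw [Finset.sum_range_succ]
    by_cases h : act rp k
    · have hsum : ∑ g, (if EatP rp k g a then Dur rp k else 0)
          = (rateS rp (St rp k) a : ℝ) * delS rp (St rp k) := by
        have hdur : Dur rp k = delS rp (St rp k) := by
          rw [Dur, St_succ_act h]
          simp only []
          ring
        have : ∀ g : Fin n, (if EatP rp k g a then Dur rp k else 0)
            = (if topS rp (St rp k) g = a then delS rp (St rp k) else 0) := by
          intro g
          by_cases ht : topS rp (St rp k) g = a
          · rw [if_pos ⟨h, ht⟩, if_pos ht, hdur]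
          · rw [if_neg (fun hE : EatP rp k g a => ht hE.2), if_neg ht]
        rw [Finset.sum_congr rfl (fun g _ => this g), ← Finset.sum_filter,
          Finset.sum_const, rateS, nsmul_eq_mul]
      rw [St_succ_act h]
      simp only []
      rw [ih, hsum]
      ring
    · have hz : ∀ g : Fin n, (if EatP rp k g a then Dur rp k else 0) = 0 := by
        intro g
        rw [if_neg (by rintro ⟨h1, -⟩; exact h h1)]
      rw [St_succ_inact h, ih]
      simp [hz]

open Classical in
lemma sum_mEat (hn : 0 < n) (a : Fin n) : ∑ g, mEat rp g a = 1 := by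
  have h1 := rem_eq_sum rp hn a n
  rw [rem_final rp hn a] at h1
  have h2 : ∑ p ∈ Finset.range n, ∑ g, (if EatP rp p g a then Dur rp p else 0) = 1 := by
    linarith
  rw [← h2]
  simp only [mEat]
  rw [Finset.sum_comm]

lemma sum_Ico_Dur (hn : 0 < n) {k l : ℕ} (hkl : k ≤ l) :
    ∑ p ∈ Finset.Ico k l, Dur rp p = (St rp l).time - (St rp k).time := by
  induction l, hkl using Nat.le_induction with
  | base => simp
  | succ l hkl ih =>
    rw [Finset.sum_Ico_succ_top hkl, ih, Dur]
    ring

open Classical in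
lemma exists_start (hn : 0 < n) (g a : Fin n) (hm : mEat rp g a ≠ 0) :
    ∃ x : ℝ, 0 ≤ x ∧ x + mEat rp g a ≤ Tf rp a ∧
      ∀ b : Fin n, (rp g).symm b < (rp g).symm a → Ex rp b < Ex rp a ∧ Tf rp b ≤ x := by
  have hex : ∃ p, EatP rp p g a := by
    by_contra hc
    push_neg at hc
    apply hm
    rw [mEat]
    exact Finset.sum_eq_zero fun p _ => if_neg (hc p)
  set p0 := sInf {p | EatP rp p g a} with hp0
  have hmem : EatP rp p0 g a := Nat.sInf_mem hex
  have htop := hmem.2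
  rw [topS_iff rp _ hmem.1] at htop
  have hltEx : p0 < Ex rp a := (lt_Ex_iff rp hn).2 htop.1
  refine ⟨(St rp p0).time, time_nonneg rp hn p0, ?_, ?_⟩
  · have hsub : ∀ p, EatP rp p g a → p0 ≤ p ∧ p < Ex rp a := by
      intro p hp
      refine ⟨Nat.sInf_le hp, ?_⟩
      have h2 := hp.2
      rw [topS_iff rp _ hp.1] at h2
      exact (lt_Ex_iff rp hn).2 h2.1
    have hle : mEat rp g a ≤ ∑ p ∈ Finset.Ico p0 (Ex rp a), Dur rp p := by
      rw [mEat, ← Finset.sum_filter]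
      apply Finset.sum_le_sum_of_subset_of_nonneg
      · intro p hp
        simp only [Finset.mem_filter, Finset.mem_range] at hp
        exact Finset.mem_Ico.2 (hsub p hp.2)
      · intro p _ _
        exact Dur_nonneg rp hn p
    rw [sum_Ico_Dur rp hn (le_of_lt hltEx)] at hle
    rw [Tf]
    linarith
  · intro b hbb
    have hrem := htop.2 b hbb
    have hEb : Ex rp b ≤ p0 := Ex_le_of_rem_nonpos rp hrem
    exact ⟨lt_of_le_of_lt hEb hltEx, time_mono rp hn hEb⟩

open Classical in
lemma m_lower (hn : 0 < n) (g a : Fin n) (x : ℝ) (hx0 : 0 ≤ x) (hx1 : x < 1)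
    (hb : ∀ b : Fin n, (rp g).symm b < (rp g).symm a → Tf rp b ≤ x) :
    Tf rp a - x ≤ mEat rp g a := by
  have hterm : ∃ k, ¬ act rp k := by
    refine ⟨n, fun hc => ?_⟩
    obtain ⟨jj, hjj⟩ := hc
    rw [mem_availS, rem_final rp hn jj] at hjj
    exact lt_irrefl _ hjj
  set A0 := sInf {k | ¬ act rp k} with hA0
  have hA0mem : ¬ act rp A0 := Nat.sInf_mem hterm
  have hA0pos : 0 < A0 := by
    rcases Nat.eq_zero_or_pos A0 with h | h
    · exfalso
      apply hA0mem
      rw [h]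
      exact ⟨a, mem_availS.2 (by rw [St_zero]; norm_num)⟩
    · exact h
  have hA0act : act rp (A0 - 1) := by
    by_contra hc
    have : sInf {k | ¬ act rp k} ≤ A0 - 1 := Nat.sInf_le hc
    omega
  have htimeA0 : (St rp A0).time = 1 := by
    have hrem : ∀ jj, (St rp A0).rem jj = 0 := by
      intro jj
      have h1 : jj ∉ availS (St rp A0) := fun hc => hA0mem ⟨jj, hc⟩
      rw [mem_availS] at h1
      push_neg at h1
      exact le_antisymm h1 (rem_nonneg rp hn A0 jj)
    have h2 := sum_rem rp hn A0
    rw [Finset.sum_congr rfl fun jj _ => hrem jj] at h2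
    have h3 : (0:ℝ) = n * (1 - (St rp A0).time) := by simpa using h2
    rcases mul_eq_zero.1 h3.symm with h | h
    · exact absurd h (Nat.cast_ne_zero.mpr hn.ne')
    · linarith
  have hQ : ∃ p, act rp p ∧ x < (St rp (p+1)).time := by
    refine ⟨A0 - 1, hA0act, ?_⟩
    rw [show A0 - 1 + 1 = A0 by omega, htimeA0]
    exact hx1
  set q0 := sInf {p | act rp p ∧ x < (St rp (p+1)).time} with hq0
  have hq0mem : act rp q0 ∧ x < (St rp (q0+1)).time := Nat.sInf_mem hQ
  have hq0time : (St rp q0).time ≤ x := by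
    rcases Nat.eq_zero_or_pos q0 with h | h
    · rw [h, time_zero]
      exact hx0
    · have hr : q0 - 1 ∉ {p | act rp p ∧ x < (St rp (p+1)).time} :=
        Nat.notMem_of_lt_sInf (by omega)
      simp only [Set.mem_setOf_eq, not_and, not_lt] at hr
      have hact : act rp (q0 - 1) := act_antitone rp hn (by omega) hq0mem.1
      have h5 := hr hact
      rwa [show q0 - 1 + 1 = q0 by omega] at h5
  rcases Nat.lt_or_ge q0 (Ex rp a) with hlt | hge
  · have hall : ∀ p, q0 ≤ p → p < Ex rp a → EatP rp p g a := by
      intro p hp1 hp2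
      refine ⟨act_of_lt_Ex rp hp2, ?_⟩
      rw [topS_iff rp _ (act_of_lt_Ex rp hp2)]
      refine ⟨rem_pos_of_lt_Ex rp hp2, fun b hbb => ?_⟩
      have hEb : Ex rp b ≤ q0 := by
        by_contra hc
        push_neg at hc
        have := time_mono rp hn (hc : q0 + 1 ≤ Ex rp b)
        have h6 := hb b hbb
        rw [Tf] at h6
        linarith [hq0mem.2]
      rw [rem_zero_of_Ex_le rp hn (le_trans hEb hp1)]
    have hle : ∑ p ∈ Finset.Ico q0 (Ex rp a), Dur rp p ≤ mEat rp g a := by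
      rw [mEat, ← Finset.sum_filter]
      apply Finset.sum_le_sum_of_subset_of_nonneg
      · intro p hp
        rw [Finset.mem_Ico] at hp
        simp only [Finset.mem_filter, Finset.mem_range]
        exact ⟨lt_of_lt_of_le hp.2 (Ex_le_n rp hn), hall p hp.1 hp.2⟩
      · intro p _ _
        exact Dur_nonneg rp hn p
    rw [sum_Ico_Dur rp hn (le_of_lt hlt)] at hle
    rw [Tf]
    linarith
  · have : Tf rp a ≤ (St rp q0).time := by
      rw [Tf]
      exact time_mono rp hn hge
    have hm := mEat_nonneg rp hn g a
    linarith

open Classical in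
lemma key_compare (s : Fin n → (Fin n ≃ Fin n)) (i : Fin n) (sStar : Fin n ≃ Fin n)
    (hn : 0 < n) :
    ∀ N : ℕ, ∀ a : Fin n, Ex (Function.update s i sStar) a ≤ N →
      Tf (Function.update s i sStar) a < 1/2 →
      Tf s a ≤ 2 * Tf (Function.update s i sStar) a := by
  intro N
  induction N using Nat.strong_induction_on with
  | _ N ih =>
    intro a hEa hτ
    set rp2 := Function.update s i sStar with hrp2
    by_contra hgt
    push_neg at hgt
    have hτpos : 0 < Tf rp2 a := Tf_pos rp2 hn
    set G := Finset.univ.filter (fun g => g ≠ i ∧ mEat rp2 g a ≠ 0) with hG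
    have hkey : ∀ g ∈ G, 2 * mEat rp2 g a < mEat s g a := by
      intro g hg
      simp only [hG, Finset.mem_filter] at hg
      obtain ⟨-, hgi, hgm⟩ := hg
      obtain ⟨x, hx0, hxm, hxb⟩ := exists_start rp2 hn g a hgm
      have hmpos : 0 < mEat rp2 g a :=
        lt_of_le_of_ne (mEat_nonneg rp2 hn g a) (Ne.symm hgm)
      have hxτ : x < Tf rp2 a := by linarith
      have hgb : ∀ b : Fin n, (s g).symm b < (s g).symm a → Tf s b ≤ 2 * x := by
        intro b hbb
        have hbb2 : (rp2 g).symm b < (rp2 g).symm a := by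
          rw [hrp2, Function.update_of_ne hgi]
          exact hbb
        obtain ⟨hEb, hTb⟩ := hxb b hbb2
        have hTb2 : Tf rp2 b < 1/2 := lt_of_le_of_lt hTb (lt_trans hxτ hτ)
        have := ih (Ex rp2 b) (lt_of_lt_of_le hEb hEa) b le_rfl hTb2
        linarith
      have hml := m_lower s hn g a (2*x) (by linarith) (by linarith) hgb
      linarith
    have hsum1 : ∑ g ∈ G, mEat s g a ≤ 1 := by
      rw [← sum_mEat s hn a]
      apply Finset.sum_le_sum_of_subset_of_nonneg (Finset.subset_univ G)
      intro g _ _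
      exact mEat_nonneg s hn g a
    have hmia : mEat rp2 i a ≤ Tf rp2 a := by
      rcases eq_or_ne (mEat rp2 i a) 0 with h | h
      · rw [h]
        exact le_of_lt hτpos
      · obtain ⟨x, hx0, hxm, -⟩ := exists_start rp2 hn i a h
        linarith
    have hsum2 : 1 - mEat rp2 i a ≤ ∑ g ∈ G, mEat rp2 g a := by
      have h1 : ∑ g, mEat rp2 g a
          = mEat rp2 i a + ∑ g ∈ Finset.univ.erase i, mEat rp2 g a :=
        (Finset.add_sum_erase _ _ (Finset.mem_univ i)).symm
      have h2 : ∑ g ∈ Finset.univ.erase i, mEat rp2 g a = ∑ g ∈ G, mEat rp2 g a := by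
        refine (Finset.sum_subset ?_ ?_).symm
        · intro g hg
          simp only [hG, Finset.mem_filter] at hg
          simp [Finset.mem_erase, hg.2.1]
        · intro g hg1 hg2
          simp only [hG, Finset.mem_filter, Finset.mem_univ, true_and] at hg2
          rw [Finset.mem_erase] at hg1
          push_neg at hg2
          exact hg2 hg1.1
      rw [sum_mEat rp2 hn a] at h1
      linarith
    have hGne : G.Nonempty := by
      by_contra hc
      rw [Finset.not_nonempty_iff_eq_empty] at hc
      rw [hc] at hsum2
      simp only [Finset.sum_empty] at hsum2
      linarith
    have hlt : ∑ g ∈ G, 2 * mEat rp2 g a < ∑ g ∈ G, mEat s g a :=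
      Finset.sum_lt_sum_of_nonempty hGne hkey
    rw [← Finset.mul_sum] at hlt
    linarith

end PSAux

/-- In Probabilistic Serial, for any report profile `s`, any agent `i`, any item
`j`, and any ordering `sStar` that ranks item `j` first, the time at which item
`j` is fully consumed satisfies `t_j(sStar, s_{-i}) ≥ (1/4) · t_j(s)`. -/
theorem ps_time_deviation {n : ℕ} (s : Fin n → (Fin n ≃ Fin n)) (i : Fin n)
    (j : Fin n) (sStar : Fin n ≃ Fin n)
    (hfirst : ∀ ℓ : Fin n, sStar.symm j ≤ sStar.symm ℓ) :
    (1 / 4 : ℝ) * psTime s j ≤ psTime (Function.update s i sStar) j := by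
  have hn : 0 < n := j.pos
  rw [PSAux.psTime_eq s hn, PSAux.psTime_eq (Function.update s i sStar) hn]
  have h1 : PSAux.Tf s j ≤ 1 := PSAux.Tf_le_one s hn
  have h0 : 0 ≤ PSAux.Tf s j := PSAux.Tf_nonneg s hn
  have h2 : 0 < PSAux.Tf (Function.update s i sStar) j :=
    PSAux.Tf_pos (Function.update s i sStar) hn
  rcases lt_or_ge (PSAux.Tf (Function.update s i sStar) j) (1/2) with h | h
  · have := PSAux.key_compare s i sStar hn
      (PSAux.Ex (Function.update s i sStar) j) j (le_refl _) h
    linarith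
  · linarith
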